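/- Let n ≥ 1, let u₁, …, uₙ be a ℤ-basis of ℤⁿ, and let v₁, …, vₙ ∈ ℤⁿ be primitive vectors such that ⟨u_i, v_j⟩ = 0 (standard bilinear pairing on ℤⁿ) whenever i ≠ j. Then v₁, …, vₙ form a ℤ-basis of ℤⁿ. -/

import Mathlib

open Matrix


/-- If `u₁, …, uₙ` is a `ℤ`-basis of `ℤⁿ` and `v₁, …, vₙ ∈ ℤⁿ` are
primitive vectors with `⟨u_i, v_j⟩ = 0` (standard pairing) for all `i ≠ j`, then
`v₁, …, vₙ` form a `ℤ`-basis of `ℤⁿ`. -/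
theorem primitive_orthogonal_basis (n : ℕ) (hn : 1 ≤ n)
    (u : Module.Basis (Fin n) ℤ (Fin n → ℤ)) (v : Fin n → (Fin n → ℤ))
    (hprim : ∀ j, v j ≠ 0 ∧ ∀ (d : ℤ) (w : Fin n → ℤ), v j = d • w → IsUnit d)
    (horth : ∀ i j, i ≠ j → ∑ k, u i k * v j k = 0) :
    ∃ b : Module.Basis (Fin n) ℤ (Fin n → ℤ), ⇑b = v := by
  set e := Pi.basisFun ℤ (Fin n) with he
  set A : Matrix (Fin n) (Fin n) ℤ := Matrix.of fun i k => u i k with hA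
  set B : Matrix (Fin n) (Fin n) ℤ := Matrix.of fun j k => v j k with hB
  -- A is the transpose of the basis-change matrix of u, hence unimodular
  have hAt : A = (e.toMatrix u)ᵀ := by
    ext i j
    simp [hA, Module.Basis.toMatrix_apply, he, Matrix.transpose_apply]
  have hAdet : IsUnit A.det := by
    rw [hAt, Matrix.det_transpose, ← Module.Basis.det_apply]
    exact e.isUnit_det u
  set M : Matrix (Fin n) (Fin n) ℤ := A * Bᵀ with hM
  have hMdiag : M = Matrix.diagonal (fun i => M i i) := by
    ext i j
    by_cases hij : i = j
    · subst hij; simp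
    · rw [Matrix.diagonal_apply_ne _ hij]
      simp only [hM, Matrix.mul_apply, Matrix.transpose_apply, hA, hB, Matrix.of_apply]
      exact horth i j hij
  haveI : Invertible A := A.invertibleOfIsUnitDet hAdet
  have hBt : Bᵀ = A⁻¹ * M := by
    rw [hM, ← Matrix.mul_assoc, Matrix.nonsing_inv_mul A hAdet, Matrix.one_mul]
  have hrow : ∀ j, v j = (M j j) • (fun k => A⁻¹ k j) := by
    intro j
    funext k
    have : B j k = Bᵀ k j := rfl
    have h2 : Bᵀ k j = A⁻¹ k j * M j j := by
      rw [hBt]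
      conv_lhs => rw [hMdiag]
      rw [Matrix.mul_diagonal]
    have hv : v j k = B j k := rfl
    rw [hv, this, h2, Pi.smul_apply, smul_eq_mul, mul_comm]
  have hunit : ∀ j, IsUnit (M j j) := fun j =>
    (hprim j).2 (M j j) (fun k => A⁻¹ k j) (hrow j)
  have hMdet : IsUnit M.det := by
    rw [hMdiag, Matrix.det_diagonal]
    exact Finset.prod_induction _ IsUnit (fun a b ha hb => ha.mul hb) isUnit_one (fun j _ => hunit j)
  have hBdet : IsUnit B.det := by
    have : M.det = A.det * B.det := by rw [hM, Matrix.det_mul, Matrix.det_transpose]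
    rw [this] at hMdet
    exact isUnit_of_mul_isUnit_right hMdet
  have hdet : IsUnit (e.det v) := by
    rw [Module.Basis.det_apply]
    have : e.toMatrix v = Bᵀ := by
      ext i j
      simp [Module.Basis.toMatrix_apply, he, hB, Matrix.transpose_apply]
    rw [this, Matrix.det_transpose]
    exact hBdet
  obtain ⟨hli, hspan⟩ := (Module.Basis.is_basis_iff_det e).mpr hdet
  exact ⟨Module.Basis.mk hli hspan.ge, Module.Basis.coe_mk _ _⟩
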